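/- Optimal ray property: let C : [0,1]^N → ℝ be affine and decreasing, and L : [0,1]^N → ℝ≥0 convex and positively homogeneous (L(λη) = λL(η) for λ ∈ [0,1]). Suppose η⋆ ∈ [0,1]^N is Pareto optimal (i.e., no η with L(η) ≤ L(η⋆) and C(η) < C(η⋆), nor with C(η) ≤ C(η⋆) and L(η) < L(η⋆)) and max_i η⋆_i < 1. Then for every λ ∈ [0, 1/max_i η⋆_i] with λη⋆ ∈ [0,1]^N, the strategy λη⋆ is also Pareto optimal. -/

import Mathlib

/-- `η` is Pareto optimal on `Δ = [0,1]^N` for the cost `C` and the loss `L`: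
no admissible strategy does at least as well on one objective and strictly better
on the other. -/
def ParetoOptimal {N : ℕ} (C L : (Fin N → ℝ) → ℝ) (η : Fin N → ℝ) : Prop :=
  η ∈ Set.Icc (0 : Fin N → ℝ) 1 ∧
    ∀ η' ∈ Set.Icc (0 : Fin N → ℝ) 1,
      (L η' ≤ L η → C η ≤ C η') ∧ (C η' ≤ C η → L η ≤ L η')

theorem optimal_ray {N : ℕ} (hN : 0 < N) (C L : (Fin N → ℝ) → ℝ)
    (hCaff : ∀ η₁ η₂ : Fin N → ℝ, ∀ t : ℝ,
      C (t • η₁ + (1 - t) • η₂) = t * C η₁ + (1 - t) * C η₂)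
    (hCdec : ∀ η₁ η₂ : Fin N → ℝ, η₁ ∈ Set.Icc (0 : Fin N → ℝ) 1 →
      η₂ ∈ Set.Icc (0 : Fin N → ℝ) 1 → η₁ ≤ η₂ → (∑ i, η₁ i) < ∑ i, η₂ i →
      C η₂ < C η₁)
    (hLnn : ∀ η, 0 ≤ L η)
    (hLcvx : ConvexOn ℝ (Set.Icc (0 : Fin N → ℝ) 1) L)
    (hLmono : ∀ η₁ η₂ : Fin N → ℝ, η₁ ∈ Set.Icc (0 : Fin N → ℝ) 1 →
      η₂ ∈ Set.Icc (0 : Fin N → ℝ) 1 → η₁ ≤ η₂ → L η₁ ≤ L η₂)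
    (hLhom : ∀ l : ℝ, l ∈ Set.Icc (0 : ℝ) 1 →
      ∀ η ∈ Set.Icc (0 : Fin N → ℝ) 1, L (l • η) = l * L η)
    (ηs : Fin N → ℝ) (hηs : ParetoOptimal C L ηs)
    (m : ℝ) (hm : IsGreatest (Set.range ηs) m) (hm0 : 0 < m) (hm1 : m < 1) :
    ∀ l : ℝ, 0 ≤ l → l ≤ 1 / m → ParetoOptimal C L (l • ηs) := by
  obtain ⟨hηsΔ, hP⟩ := hηs
  have hmne : m ≠ 0 := ne_of_gt hm0
  have hub : ∀ i, ηs i ≤ m := fun i => hm.2 ⟨i, rfl⟩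
  have hnn : ∀ i, 0 ≤ ηs i := fun i => hηsΔ.1 i
  have memRay : ∀ l : ℝ, 0 ≤ l → l ≤ 1 / m → l • ηs ∈ Set.Icc (0 : Fin N → ℝ) 1 := by
    intro l h0 h1
    constructor
    · intro i
      simpa using mul_nonneg h0 (hnn i)
    · intro i
      simp only [Pi.smul_apply, smul_eq_mul, Pi.one_apply]
      calc l * ηs i ≤ l * m := mul_le_mul_of_nonneg_left (hub i) h0
        _ ≤ (1 / m) * m := mul_le_mul_of_nonneg_right h1 hm0.le
        _ = 1 := by field_simp
  have Lray : ∀ l : ℝ, 0 ≤ l → l ≤ 1 / m → L (l • ηs) = l * L ηs := by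
    intro l h0 h1
    rcases le_or_gt l 1 with h | h
    · exact hLhom l ⟨h0, h⟩ ηs hηsΔ
    · have hl0 : (0 : ℝ) < l := lt_trans one_pos h
      have hinv : l⁻¹ ≤ 1 := by
        nlinarith [inv_mul_cancel₀ (ne_of_gt hl0), inv_nonneg.mpr hl0.le]
      have h2 := hLhom l⁻¹ ⟨inv_nonneg.mpr hl0.le, hinv⟩ (l • ηs) (memRay l h0 h1)
      rw [smul_smul, inv_mul_cancel₀ (ne_of_gt hl0), one_smul] at h2
      rw [h2, ← mul_assoc, mul_inv_cancel₀ (ne_of_gt hl0), one_mul]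
  intro l hl0 hlm
  have key : ∀ μ t : ℝ, 0 ≤ μ → μ ≤ 1 / m → 0 < t → t ≤ 1 → t * l + (1 - t) * μ = 1 →
      ParetoOptimal C L (l • ηs) := by
    intro μ t hμ0 hμm ht0 ht1 hsum
    have hlΔ := memRay l hl0 hlm
    have hμΔ := memRay μ hμ0 hμm
    refine ⟨hlΔ, fun η' hη' => ?_⟩
    have hcomb : t • (l • ηs) + (1 - t) • (μ • ηs) = ηs := by
      rw [smul_smul, smul_smul, ← add_smul, hsum, one_smul]
    have hCs : C ηs = t * C (l • ηs) + (1 - t) * C (μ • ηs) := by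
      rw [← hCaff (l • ηs) (μ • ηs) t, hcomb]
    have hη''Δ : t • η' + (1 - t) • (μ • ηs) ∈ Set.Icc (0 : Fin N → ℝ) 1 :=
      convex_Icc (0 : Fin N → ℝ) 1 hη' hμΔ ht0.le (by linarith) (by ring)
    have hC'' : C (t • η' + (1 - t) • (μ • ηs)) = t * C η' + (1 - t) * C (μ • ηs) :=
      hCaff η' (μ • ηs) t
    have hL'' : L (t • η' + (1 - t) • (μ • ηs)) ≤ t * L η' + (1 - t) * L (μ • ηs) :=
      hLcvx.2 hη' hμΔ ht0.le (by linarith) (by ring)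
    have hLl : L (l • ηs) = l * L ηs := Lray l hl0 hlm
    have hLb : L (μ • ηs) = μ * L ηs := Lray μ hμ0 hμm
    have hLs : L ηs = t * L (l • ηs) + (1 - t) * L (μ • ηs) := by
      rw [hLl, hLb]
      linear_combination (-(L ηs)) * hsum
    constructor
    · intro hLle
      by_contra hc
      push_neg at hc
      have h1 : L (t • η' + (1 - t) • (μ • ηs)) ≤ L ηs := by
        rw [hLs]
        nlinarith [mul_le_mul_of_nonneg_left hLle ht0.le]
      have h2 := (hP _ hη''Δ).1 h1
      rw [hC'', hCs] at h2
      nlinarith [mul_lt_mul_of_pos_left hc ht0]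
    · intro hCle
      by_contra hc
      push_neg at hc
      have h1 : C (t • η' + (1 - t) • (μ • ηs)) ≤ C ηs := by
        rw [hC'', hCs]
        nlinarith [mul_le_mul_of_nonneg_left hCle ht0.le]
      have h2 := (hP _ hη''Δ).2 h1
      have h3 : L (t • η' + (1 - t) • (μ • ηs)) < L ηs := by
        rw [hLs]
        nlinarith [mul_lt_mul_of_pos_left hc ht0]
      linarith
  rcases le_or_gt l 1 with hle | hgt
  · have hd : 0 < 1 - l * m := by nlinarith
    refine key (1 / m) ((1 - m) / (1 - l * m)) (by positivity) le_rfl (div_pos (by linarith) hd) ?_ ?_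
    · rw [div_le_one hd]; nlinarith
    · linear_combination (-(1 - m) * m⁻¹) * mul_inv_cancel₀ hd.ne' + (1 - (1 - m) * l * (1 - l * m)⁻¹) * mul_inv_cancel₀ hmne
  · have hlpos : (0 : ℝ) < l := lt_trans one_pos hgt
    refine key 0 (1 / l) le_rfl (le_of_lt (one_div_pos.mpr hm0)) (one_div_pos.mpr hlpos) ?_ ?_
    · rw [div_le_one hlpos]; linarith
    · field_simp
      ring
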